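/- Let q be a prime power, m ≥ 1, r = q^m, h and f integers, e = gcd(h, r+1), and d_j = (jh + f)(r-1) + 2f mod (r²-1) for 0 ≤ j ≤ t. Then gcd(d₀, d₁, …, d_t, r²-1) = gcd((r+1)f, (r-1)e) provided 1 ≤ t < (r+1)/(2e). -/

import Mathlib

/-- Let `q = p^l` be a prime power, `r = q^m`, `h, f` integers,
`e = gcd(h, r+1)` and `d_j ≡ (jh + f)(r-1) + 2f (mod r²-1)` for `0 ≤ j ≤ t`,
with `1 ≤ t < (r+1)/(2e)`. Then
`gcd(d₀, …, d_t, r²-1) = gcd((r+1)f, (r-1)e)`. -/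
theorem stmt19 (p l q m r : ℕ) (hp : p.Prime) (hl : 1 ≤ l) (hq : q = p ^ l)
    (hm : 1 ≤ m) (hr : r = q ^ m)
    (h f : ℤ) (e : ℕ) (he : e = Int.gcd h (r + 1))
    (t : ℕ) (ht1 : 1 ≤ t) (ht2 : 2 * e * t < r + 1)
    (d : ℕ → ℤ)
    (hd : ∀ j ≤ t, d j ≡ ((j : ℤ) * h + f) * ((r : ℤ) - 1) + 2 * f
      [ZMOD ((r : ℤ) ^ 2 - 1)]) :
    Int.gcd (Finset.gcd (Finset.range (t + 1)) d) ((r : ℤ) ^ 2 - 1) =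
      Int.gcd (((r : ℤ) + 1) * f) (((r : ℤ) - 1) * (e : ℤ)) := by
  set N : ℤ := (r : ℤ) ^ 2 - 1 with hNdef
  have hfac : N = ((r : ℤ) - 1) * ((r : ℤ) + 1) := by rw [hNdef]; ring
  apply Nat.dvd_antisymm
  · set g1 : ℤ := (Int.gcd (Finset.gcd (Finset.range (t + 1)) d) N : ℤ) with hg1
    have h3 : g1 ∣ N := Int.gcd_dvd_right _ _
    have h1 : g1 ∣ d 0 :=
      (Int.gcd_dvd_left _ _).trans (Finset.gcd_dvd (Finset.mem_range.mpr (Nat.succ_pos t)))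
    have h2 : g1 ∣ d 1 :=
      (Int.gcd_dvd_left _ _).trans (Finset.gcd_dvd (Finset.mem_range.mpr (by omega)))
    have hA : g1 ∣ ((r : ℤ) + 1) * f := by
      have hmod := (hd 0 (Nat.zero_le t)).dvd
      have heq : ((r : ℤ) + 1) * f
          = d 0 + ((((0 : ℕ) : ℤ) * h + f) * ((r : ℤ) - 1) + 2 * f - d 0) := by
        push_cast; ring
      rw [heq]
      exact dvd_add h1 (h3.trans hmod)
    have hB : g1 ∣ h * ((r : ℤ) - 1) := by
      have hmod := (hd 1 ht1).dvd
      have heq : h * ((r : ℤ) - 1)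
          = d 1 + ((((1 : ℕ) : ℤ) * h + f) * ((r : ℤ) - 1) + 2 * f - d 1)
            - ((r : ℤ) + 1) * f := by
        push_cast; ring
      rw [heq]
      exact dvd_sub (dvd_add h2 (h3.trans hmod)) hA
    have hbez : (e : ℤ) = h * Int.gcdA h ((r : ℤ) + 1)
        + ((r : ℤ) + 1) * Int.gcdB h ((r : ℤ) + 1) := by
      rw [he]; exact Int.gcd_eq_gcd_ab h ((r : ℤ) + 1)
    have hRE : g1 ∣ ((r : ℤ) - 1) * (e : ℤ) := by
      have heq : ((r : ℤ) - 1) * (e : ℤ)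
          = h * ((r : ℤ) - 1) * Int.gcdA h ((r : ℤ) + 1)
            + N * Int.gcdB h ((r : ℤ) + 1) := by
        rw [hbez, hfac]; ring
      rw [heq]
      exact dvd_add (hB.mul_right _) (h3.mul_right _)
    exact Int.natCast_dvd_natCast.mp (Int.dvd_coe_gcd hA hRE)
  · set g2 : ℤ := (Int.gcd (((r : ℤ) + 1) * f) (((r : ℤ) - 1) * (e : ℤ)) : ℤ) with hg2
    have hg2f : g2 ∣ ((r : ℤ) + 1) * f := Int.gcd_dvd_left _ _
    have hg2e : g2 ∣ ((r : ℤ) - 1) * (e : ℤ) := Int.gcd_dvd_right _ _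
    have heh : (e : ℤ) ∣ h := by rw [he]; exact Int.gcd_dvd_left _ _
    have her : (e : ℤ) ∣ (r : ℤ) + 1 := by rw [he]; exact Int.gcd_dvd_right _ _
    have hg2h : g2 ∣ h * ((r : ℤ) - 1) := by
      have : ((r : ℤ) - 1) * (e : ℤ) ∣ h * ((r : ℤ) - 1) := by
        rw [mul_comm h]; exact mul_dvd_mul_left _ heh
      exact hg2e.trans this
    have hg2N : g2 ∣ N := by
      have : ((r : ℤ) - 1) * (e : ℤ) ∣ N := by
        rw [hfac]; exact mul_dvd_mul_left _ her
      exact hg2e.trans this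
    have hg2d : ∀ j ∈ Finset.range (t + 1), g2 ∣ d j := by
      intro j hj
      have hjt : j ≤ t := Nat.lt_succ_iff.mp (Finset.mem_range.mp hj)
      have hmod := (hd j hjt).dvd
      have heq : d j = (j : ℤ) * (h * ((r : ℤ) - 1)) + ((r : ℤ) + 1) * f
          - (((j : ℤ) * h + f) * ((r : ℤ) - 1) + 2 * f - d j) := by ring
      rw [heq]
      exact dvd_sub (dvd_add (hg2h.mul_left _) hg2f) (hg2N.trans hmod)
    exact Int.natCast_dvd_natCast.mp (Int.dvd_coe_gcd (Finset.dvd_gcd hg2d) hg2N)
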